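/- In a zone tariff with overlap areas, for any path W split at an intermediate node into W_1 + W_2, the zone counts satisfy z(W) ≤ z(W_1) + z(W_2) ≤ z(W) + 1. -/

import Mathlib

open scoped Classical

/-- A path in a graph given by adjacency relation `adj`: a nonempty list of
consecutively adjacent nodes. -/
def IsPath {V : Type*} (adj : V → V → Prop) (W : List V) : Prop :=
  W ≠ [] ∧ W.Chain' adj

/-- An `x`-`y`-path. -/
def IsXYPath {V : Type*} (adj : V → V → Prop) (x y : V) (W : List V) : Prop :=
  IsPath adj W ∧ W.head? = some x ∧ W.getLast? = some y

/-- `W` decomposes as the concatenation `W₁ + W₂` (the last node of `W₁` is the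
first node of `W₂`). -/
def Splits {V : Type*} (W W₁ W₂ : List V) : Prop :=
  W₁ ≠ [] ∧ W₂ ≠ [] ∧ W₁.getLast? = W₂.head? ∧ W = W₁ ++ W₂.tail

/-- `W` splits at an intermediate node into `W₁ + W₂` (both parts have at least
two nodes). -/
def SplitsAt {V : Type*} (W W₁ W₂ : List V) : Prop :=
  2 ≤ W₁.length ∧ 2 ≤ W₂.length ∧ W₁.getLast? = W₂.head? ∧ W = W₁ ++ W₂.tail

/-- The no-stopover property: splitting a path at an intermediate node never
decreases the total price. -/
def NoStopover {V : Type*} (adj : V → V → Prop) (p : List V → ℝ) : Prop :=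
  ∀ W W₁ W₂ : List V, IsPath adj W → IsPath adj W₁ → IsPath adj W₂ →
    SplitsAt W W₁ W₂ → p W ≤ p W₁ + p W₂

/-- The no-elongation property: removing the last node of a path never
increases the price. -/
def NoElongation {V : Type*} (adj : V → V → Prop) (p : List V → ℝ) : Prop :=
  ∀ W : List V, IsPath adj W → 2 ≤ W.length → p W.dropLast ≤ p W

/-- Number of consecutive zone changes in a zone assignment. -/
noncomputable def assignmentBorders {Z : Type*} : List Z → ℕ
  | x :: y :: rest => (if x = y then 0 else 1) + assignmentBorders (y :: rest)
  | _ => 0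

/-- An assignment of a zone to each station occurrence of a path, choosing for
each node one of the zones it belongs to. -/
def ValidAssign {V Z : Type*} (zones : V → Set Z) (W : List V) (h : List Z) : Prop :=
  List.Forall₂ (fun v z => z ∈ zones v) W h

/-- Number of zones visited by a path in a zone tariff with overlap areas:
one plus the minimum number of zone changes over all valid assignments. -/
noncomputable def zoaCount {V Z : Type*} (zones : V → Set Z) (W : List V) : ℕ :=
  1 + sInf { b | ∃ h : List Z, ValidAssign zones W h ∧ b = assignmentBorders h }

section ZoaAux

variable {V Z : Type*}

lemma zoaValidExists (zones : V → Set Z) (hz : ∀ v, (zones v).Nonempty) :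
    ∀ W : List V, ∃ h, ValidAssign zones W h
  | [] => ⟨[], List.Forall₂.nil⟩
  | v :: W => by
    obtain ⟨h, hh⟩ := zoaValidExists zones hz W
    exact ⟨(hz v).choose :: h, List.Forall₂.cons (hz v).choose_spec hh⟩

lemma zoaSetNonempty (zones : V → Set Z) (hz : ∀ v, (zones v).Nonempty) (W : List V) :
    { b | ∃ h, ValidAssign zones W h ∧ b = assignmentBorders h }.Nonempty := by
  obtain ⟨h, hh⟩ := zoaValidExists zones hz W
  exact ⟨_, h, hh, rfl⟩

lemma bordersConsLe (z : Z) (t : List Z) : assignmentBorders t ≤ assignmentBorders (z :: t) := by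
  cases t with
  | nil => simp [assignmentBorders]
  | cons c r => simp only [assignmentBorders]; omega

lemma bordersAppend : ∀ (a : List Z) (y x : Z) (b : List Z),
    assignmentBorders (a ++ y :: x :: b) =
      assignmentBorders (a ++ [y]) + ((if y = x then 0 else 1) + assignmentBorders (x :: b))
  | [], y, x, b => by simp [assignmentBorders]
  | [u], y, x, b => by simp [assignmentBorders]
  | u :: w :: a, y, x, b => by
    have ih := bordersAppend (w :: a) y x b
    simp only [List.cons_append] at ih ⊢
    simp only [assignmentBorders]
    rw [ih]; ring

lemma zoaForall2Last {r : V → Z → Prop} :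
    ∀ {l₁ : List V} {l₂ : List Z}, List.Forall₂ r l₁ l₂ →
      ∀ {x y}, l₁.getLast? = some x → l₂.getLast? = some y → r x y := by
  intro l₁ l₂ hf
  induction hf with
  | nil => intro x y hx _; simp at hx
  | @cons a b l₁ l₂ h₁ h₂ ih =>
    intro x y hx hy
    cases h₂ with
    | nil => simp_all
    | @cons a' b' l₁' l₂' h₁' h₂' =>
      rw [List.getLast?_cons_cons] at hx hy
      exact ih hx hy

end ZoaAux


/-- In a zone tariff with overlap areas, for any path `W` split at an
intermediate node into `W₁ + W₂`, the zone counts satisfy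
`z(W) ≤ z(W₁) + z(W₂) ≤ z(W) + 1`. -/
theorem zoa_split_count {V Z : Type*} (adj : V → V → Prop) (zones : V → Set Z)
    (hz : ∀ v, (zones v).Nonempty)
    (W W₁ W₂ : List V) (hW : IsPath adj W) (hW₁ : IsPath adj W₁)
    (hW₂ : IsPath adj W₂) (hsplit : SplitsAt W W₁ W₂) :
    zoaCount zones W ≤ zoaCount zones W₁ + zoaCount zones W₂ ∧
      zoaCount zones W₁ + zoaCount zones W₂ ≤ zoaCount zones W + 1 := by
  obtain ⟨hl1, hl2, hlast, hWeq⟩ := hsplit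
  have hW₂ne : W₂ ≠ [] := by rintro rfl; simp at hl2
  have hW₁ne : W₁ ≠ [] := by rintro rfl; simp at hl1
  have htailne : W₂.tail ≠ [] := by
    match W₂, hl2 with
    | v :: w :: r, _ => simp
  have hne := zoaSetNonempty zones hz
  have hW₂eq : W₂.head hW₂ne :: W₂.tail = W₂ := List.cons_head_tail hW₂ne
  have hlast' : W₁.getLast? = some (W₂.head hW₂ne) := by
    rw [hlast]; exact List.head?_eq_head hW₂ne
  simp only [zoaCount]
  -- optimal assignment for W
  obtain ⟨h, hv, hb⟩ := Nat.sInf_mem (hne W)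
  obtain ⟨g₁, hg1, hb1⟩ := Nat.sInf_mem (hne W₁)
  obtain ⟨g₂, hg2, hb2⟩ := Nat.sInf_mem (hne W₂)
  constructor
  · -- z(W) ≤ z(W₁) + z(W₂)
    have hg2' : List.Forall₂ (fun v z => z ∈ zones v) (W₂.head hW₂ne :: W₂.tail) g₂ := by
      rw [hW₂eq]; exact hg2
    cases hg2' with
    | @cons _ z₀ _ t hz₀ ht =>
      have htne : t ≠ [] := by
        intro h0; subst h0
        exact htailne (List.length_eq_zero_iff.mp (by simpa using ht.length_eq))
      obtain ⟨z₁, t', rfl⟩ : ∃ z₁ t', t = z₁ :: t' := by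
        cases t with
        | nil => exact absurd rfl htne
        | cons z₁ t' => exact ⟨z₁, t', rfl⟩
      have hg1ne : g₁ ≠ [] := by
        intro h0; subst h0
        exact hW₁ne (List.length_eq_zero_iff.mp (by simpa using hg1.length_eq))
      obtain ⟨a, y, rfl⟩ : ∃ a y, g₁ = a ++ [y] := by
        rcases List.eq_nil_or_concat' g₁ with h0 | ⟨a, y, hy⟩
        · exact absurd h0 hg1ne
        · exact ⟨a, y, hy⟩
      have hvalid : ValidAssign zones W ((a ++ [y]) ++ z₁ :: t') := by
        rw [hWeq]; exact List.rel_append hg1 ht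
      have hle : sInf { b | ∃ h : List Z, ValidAssign zones W h ∧ b = assignmentBorders h }
          ≤ assignmentBorders ((a ++ [y]) ++ z₁ :: t') :=
        Nat.sInf_le ⟨_, hvalid, rfl⟩
      have heq : assignmentBorders ((a ++ [y]) ++ z₁ :: t') =
          assignmentBorders (a ++ [y]) + ((if y = z₁ then 0 else 1) + assignmentBorders (z₁ :: t')) := by
        rw [List.append_assoc, List.cons_append, List.nil_append, bordersAppend]
      have hcle : assignmentBorders (z₁ :: t') ≤ assignmentBorders (z₀ :: z₁ :: t') :=
        bordersConsLe _ _
      have hite : (if y = z₁ then (0:ℕ) else 1) ≤ 1 := by split <;> omega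
      rw [hb, hb1, hb2]
      omega
  · -- z(W₁) + z(W₂) ≤ z(W) + 1
    have hv' : List.Forall₂ (fun v z => z ∈ zones v) (W₁ ++ W₂.tail) h := by
      rw [← hWeq]; exact hv
    have f1 := List.forall₂_take W₁.length hv'
    rw [List.take_left] at f1
    have f2 := List.forall₂_drop W₁.length hv'
    rw [List.drop_left] at f2
    rw [← List.take_append_drop W₁.length h] at hb
    set h₁ := List.take W₁.length h with hh₁def
    set t := List.drop W₁.length h with htdef
    clear_value h₁ t
    clear hv hv' hh₁def htdef
    have hh₁ne : h₁ ≠ [] := by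
      intro h0; subst h0
      exact hW₁ne (List.length_eq_zero_iff.mp (by simpa using f1.length_eq))
    have htne : t ≠ [] := by
      intro h0; subst h0
      exact htailne (List.length_eq_zero_iff.mp (by simpa using f2.length_eq))
    obtain ⟨a, y, rfl⟩ : ∃ a y, h₁ = a ++ [y] := by
      rcases List.eq_nil_or_concat' h₁ with h0 | ⟨a, y, hy⟩
      · exact absurd h0 hh₁ne
      · exact ⟨a, y, hy⟩
    obtain ⟨z₁, t', rfl⟩ : ∃ z₁ t', t = z₁ :: t' := by
      cases t with
      | nil => exact absurd rfl htne
      | cons z₁ t' => exact ⟨z₁, t', rfl⟩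
    have hy : y ∈ zones (W₂.head hW₂ne) := by
      refine zoaForall2Last f1 hlast' ?_
      simp
    have hv2' : ValidAssign zones W₂ (y :: z₁ :: t') := by
      rw [← hW₂eq]; exact List.Forall₂.cons hy f2
    have hle1 : sInf { b | ∃ h : List Z, ValidAssign zones W₁ h ∧ b = assignmentBorders h }
        ≤ assignmentBorders (a ++ [y]) := Nat.sInf_le ⟨_, f1, rfl⟩
    have hle2 : sInf { b | ∃ h : List Z, ValidAssign zones W₂ h ∧ b = assignmentBorders h }
        ≤ assignmentBorders (y :: z₁ :: t') := Nat.sInf_le ⟨_, hv2', rfl⟩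
    have heq : assignmentBorders ((a ++ [y]) ++ z₁ :: t') =
        assignmentBorders (a ++ [y]) + ((if y = z₁ then 0 else 1) + assignmentBorders (z₁ :: t')) := by
      rw [List.append_assoc, List.cons_append, List.nil_append, bordersAppend]
    have heq2 : assignmentBorders (y :: z₁ :: t') =
        (if y = z₁ then 0 else 1) + assignmentBorders (z₁ :: t') := by
      simp only [assignmentBorders]
    rw [hb]
    omega
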